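/- Let X be a finite T₀-space and x ∈ X a point whose link Ĉ_x is a collapsible finite space (but not necessarily contractible). Then the order complex K(X) simplicially collapses to K(X ∖ {x}). -/
import Mathlib


/-!
STATEMENT 5: Let X be a finite T₀-space and x ∈ X a point whose link Ĉ_x is a collapsible
finite space (not necessarily contractible). Then the order complex K(X) simplicially
collapses to K(X ∖ {x}).

A finite T₀-space is identified with a finite poset with the down-set topology; the link
of x is Ĉ_x = {y | y < x ∨ y > x} with the subspace topology.  Collapsibility of a finite
space means that it collapses to a one-point space by successively removing weak points.
-/

noncomputable section

/-- The Alexandrov "down-set" topology on a poset: open sets are the lower sets. -/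
def downTop (X : Type*) [Preorder X] : TopologicalSpace X := Topology.lowerSet X

/-- A subset of a poset is contractible when, with the subspace topology coming from the
down-set topology, it is homotopy equivalent to a point. -/
def SubContractible {X : Type*} [Preorder X] (A : Set X) : Prop :=
  @ContractibleSpace A (TopologicalSpace.induced Subtype.val (downTop X))

/-- `x` is a weak point of the subspace `A`: the set of points of `A` strictly below `x`
or the set of points of `A` strictly above `x` is contractible. -/
def IsWeakPointIn {X : Type*} [PartialOrder X] (A : Set X) (x : X) : Prop :=
  x ∈ A ∧ (SubContractible {y | y ∈ A ∧ y < x} ∨ SubContractible {y | y ∈ A ∧ x < y})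

/-- Elementary collapse of finite spaces: removal of a single weak point. -/
def ElemSpaceCollapse {X : Type*} [PartialOrder X] (A B : Set X) : Prop :=
  ∃ x, IsWeakPointIn A x ∧ B = A \ {x}

/-- The finite space `A` collapses to `B`: a finite sequence of elementary collapses. -/
def SpaceCollapses {X : Type*} [PartialOrder X] (A B : Set X) : Prop :=
  Relation.ReflTransGen ElemSpaceCollapse A B

/-- The finite space `A` is collapsible: it collapses to a one-point subspace. -/
def SpaceCollapsible {X : Type*} [PartialOrder X] (A : Set X) : Prop :=
  ∃ y ∈ A, SpaceCollapses A {y}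

/-- Elementary simplicial collapse: remove a free pair `(σ, τ)`, where `τ` is a proper
face of `σ` and of no other simplex of `K`. -/
def ElemSCollapse {V : Type*} [DecidableEq V] (K L : Finset (Finset V)) : Prop :=
  ∃ σ ∈ K, ∃ τ ∈ K, τ ⊂ σ ∧ (∀ ρ ∈ K, τ ⊂ ρ → ρ = σ) ∧ L = (K.erase σ).erase τ

/-- `K` collapses simplicially to `L`: a finite sequence of elementary collapses. -/
def SCollapses {V : Type*} [DecidableEq V] (K L : Finset (Finset V)) : Prop :=
  Relation.ReflTransGen ElemSCollapse K L

open scoped Classical in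
/-- The full subcomplex of the order complex of the poset `X` spanned by a subset `A`:
its simplices are the nonempty chains of `X` contained in `A`. -/
def orderComplexIn (X : Type*) [Preorder X] [Fintype X] (A : Set X) : Finset (Finset X) :=
  Finset.univ.filter fun σ => σ.Nonempty ∧ IsChain (· ≤ ·) (σ : Set X) ∧ ↑σ ⊆ A

/-! ### Part 0: master combinatorial collapse lemma -/

open scoped Classical

theorem masterCollapseAux {V : Type*} [DecidableEq V] (P : Finset V → Prop) (c : V)
    (hmono : ∀ ⦃σ τ : Finset V⦄, σ ⊆ τ → P σ → P τ)
    (herase : ∀ ⦃σ : Finset V⦄, P σ → P (σ.erase c)) :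
    ∀ (n : ℕ) (K : Finset (Finset V)), (K.filter P).card ≤ n →
    (∀ σ ∈ K, P σ → insert c σ ∈ K ∧ σ.erase c ∈ K) →
    SCollapses K (K.filter fun σ => ¬ P σ) := by
  intro n
  induction n with
  | zero =>
    intro K hcard _
    have h : K.filter (fun σ => ¬ P σ) = K := by
      apply Finset.filter_true_of_mem
      intro σ hσ hP
      have : σ ∈ K.filter P := Finset.mem_filter.2 ⟨hσ, hP⟩
      simp [Finset.card_eq_zero.1 (Nat.le_zero.1 hcard)] at this
    rw [h]; exact Relation.ReflTransGen.refl
  | succ n ih =>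
    intro K hcard hclos
    by_cases hempty : (K.filter P) = ∅
    · have h : K.filter (fun σ => ¬ P σ) = K := by
        apply Finset.filter_true_of_mem
        intro σ hσ hP
        have : σ ∈ K.filter P := Finset.mem_filter.2 ⟨hσ, hP⟩
        simp [hempty] at this
      rw [h]; exact Relation.ReflTransGen.refl
    · obtain ⟨ρ, hρ⟩ := Finset.nonempty_iff_ne_empty.2 hempty
      have hρK := (Finset.mem_filter.1 hρ).1
      have hρP := (Finset.mem_filter.1 hρ).2
      have hcand : (K.filter (fun σ => P σ ∧ c ∉ σ)).Nonempty :=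
        ⟨ρ.erase c, Finset.mem_filter.2 ⟨(hclos ρ hρK hρP).2, herase hρP, Finset.notMem_erase _ _⟩⟩
      obtain ⟨σ, hσmem, hσmax⟩ := Finset.exists_max_image _ Finset.card hcand
      obtain ⟨hσK, hσP, hcσ⟩ := Finset.mem_filter.1 hσmem
      have hins : insert c σ ∈ K := (hclos σ hσK hσP).1
      have hssub : σ ⊂ insert c σ := Finset.ssubset_insert hcσ
      have hfree : ∀ ρ' ∈ K, σ ⊂ ρ' → ρ' = insert c σ := by
        intro ρ' hρ'K hρ'ss
        by_contra hne
        have hρ'P : P ρ' := hmono hρ'ss.subset hσP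
        have h1 : ρ'.erase c ∈ K := (hclos ρ' hρ'K hρ'P).2
        have h2 : P (ρ'.erase c) := herase hρ'P
        have hsub : σ ⊆ ρ'.erase c := fun a ha =>
          Finset.mem_erase.2 ⟨fun h => hcσ (h ▸ ha), hρ'ss.subset ha⟩
        have hne2 : σ ≠ ρ'.erase c := by
          intro h
          by_cases hc : c ∈ ρ'
          · exact hne (by rw [h, Finset.insert_erase hc])
          · rw [Finset.erase_eq_of_notMem hc] at h; exact hρ'ss.ne h
        have hss : σ ⊂ ρ'.erase c := Finset.ssubset_iff_subset_ne.2 ⟨hsub, hne2⟩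
        have hle := hσmax (ρ'.erase c)
          (Finset.mem_filter.2 ⟨h1, h2, Finset.notMem_erase _ _⟩)
        exact absurd (Finset.card_lt_card hss) (not_lt.2 hle)
      set K' := (K.erase (insert c σ)).erase σ with hK'
      have hstep : ElemSCollapse K K' := ⟨insert c σ, hins, σ, hσK, hssub, hfree, rfl⟩
      have hmemK' : ∀ τ, τ ∈ K' ↔ (τ ∈ K ∧ τ ≠ σ ∧ τ ≠ insert c σ) := by
        intro τ
        simp only [hK', Finset.mem_erase]
        tauto
      have hclos' : ∀ τ ∈ K', P τ → insert c τ ∈ K' ∧ τ.erase c ∈ K' := by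
        intro τ hτ hτP
        obtain ⟨hτK, hτσ, hτcσ⟩ := (hmemK' τ).1 hτ
        constructor
        · refine (hmemK' _).2 ⟨(hclos τ hτK hτP).1, ?_, ?_⟩
          · intro h; exact hcσ (h ▸ Finset.mem_insert_self c τ)
          · intro h
            have h2 : τ.erase c = σ := by
              have := congrArg (fun s => Finset.erase s c) h
              simpa [Finset.erase_insert hcσ] using this
            by_cases hc : c ∈ τ
            · exact hτcσ (by rw [← h2, Finset.insert_erase hc])
            · exact hτσ (by rw [← h2, Finset.erase_eq_of_notMem hc])
        · refine (hmemK' _).2 ⟨(hclos τ hτK hτP).2, ?_, ?_⟩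
          · intro h
            by_cases hc : c ∈ τ
            · exact hτcσ (by rw [← h, Finset.insert_erase hc])
            · exact hτσ (by rw [← h, Finset.erase_eq_of_notMem hc])
          · intro h
            exact Finset.notMem_erase c τ (h ▸ Finset.mem_insert_self c σ)
      have hcard' : (K'.filter P).card ≤ n := by
        have hsubf : K'.filter P ⊆ (K.filter P).erase σ := by
          intro τ hτ
          obtain ⟨hτK', hτP⟩ := Finset.mem_filter.1 hτ
          obtain ⟨hτK, hτσ, _⟩ := (hmemK' τ).1 hτK'
          exact Finset.mem_erase.2 ⟨hτσ, Finset.mem_filter.2 ⟨hτK, hτP⟩⟩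
        calc (K'.filter P).card ≤ ((K.filter P).erase σ).card := Finset.card_le_card hsubf
          _ = (K.filter P).card - 1 :=
            Finset.card_erase_of_mem (Finset.mem_filter.2 ⟨hσK, hσP⟩)
          _ ≤ n := by omega
      have hfilter_eq : K'.filter (fun τ => ¬ P τ) = K.filter (fun τ => ¬ P τ) := by
        ext τ
        simp only [Finset.mem_filter, hmemK' τ]
        constructor
        · rintro ⟨⟨h1, _, _⟩, h2⟩; exact ⟨h1, h2⟩
        · rintro ⟨h1, h2⟩
          refine ⟨⟨h1, ?_, ?_⟩, h2⟩
          · rintro rfl; exact h2 hσP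
          · rintro rfl; exact h2 (hmono (Finset.subset_insert c σ) hσP)
      have := ih K' hcard' hclos'
      rw [hfilter_eq] at this
      exact Relation.ReflTransGen.head hstep this

theorem masterCollapse {V : Type*} [DecidableEq V] (K : Finset (Finset V))
    (P : Finset V → Prop) (c : V)
    (hmono : ∀ ⦃σ τ : Finset V⦄, σ ⊆ τ → P σ → P τ)
    (herase : ∀ ⦃σ : Finset V⦄, P σ → P (σ.erase c))
    (hclos : ∀ σ ∈ K, P σ → insert c σ ∈ K ∧ σ.erase c ∈ K) :
    SCollapses K (K.filter fun σ => ¬ P σ) :=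
  masterCollapseAux P c hmono herase (K.filter P).card K le_rfl hclos
variable {X : Type*} [PartialOrder X]

lemma induced_lowerSet_eq (S : Set X) :
    TopologicalSpace.induced (Subtype.val : S → X) (Topology.lowerSet X)
      = Topology.lowerSet ↥S := by
  apply TopologicalSpace.ext
  funext s
  apply propext
  show (∃ t, IsLowerSet t ∧ Subtype.val ⁻¹' t = s) ↔ IsLowerSet s
  constructor
  · rintro ⟨t, ht, rfl⟩
    exact ht.preimage fun a b h => h
  · intro hs
    refine ⟨↑(lowerClosure (Subtype.val '' s)), (lowerClosure _).lower, ?_⟩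
    ext u
    simp only [Set.mem_preimage, SetLike.mem_coe, mem_lowerClosure, Set.mem_image]
    constructor
    · rintro ⟨_, ⟨v, hv, rfl⟩, huv⟩
      exact hs (Subtype.coe_le_coe.1 huv) hv
    · intro hu
      exact ⟨↑u, ⟨u, hu, rfl⟩, le_rfl⟩

lemma subContractible_iff (S : Set X) :
    SubContractible S ↔ @ContractibleSpace ↥S (Topology.lowerSet ↥S) := by
  unfold SubContractible downTop
  rw [induced_lowerSet_eq]

/-- one "fence" comparability step between monotone selfmaps -/
def MComp {U : Set X} (f g : ↥U → ↥U) : Prop :=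
  Monotone f ∧ Monotone g ∧ (f ≤ g ∨ g ≤ f)

variable [Fintype X]

open unitInterval in
lemma fence_of_contractible (U : Set X) (h : SubContractible U) :
    ∃ y₀ : ↥U, Relation.ReflTransGen MComp id (Function.const ↥U y₀) := by
  rw [subContractible_iff] at h
  letI : TopologicalSpace ↥U := Topology.lowerSet ↥U
  haveI : Topology.IsLowerSet ↥U := ⟨rfl⟩
  obtain ⟨y₀, ⟨H⟩⟩ := (contractible_iff_id_nullhomotopic ↥U).1 h
  refine ⟨y₀, ?_⟩
  set slice : I → (↥U → ↥U) := fun t a => H (t, a) with hslice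
  have hslicemono : ∀ t, Monotone (slice t) := by
    intro t
    rw [Topology.IsLowerSet.monotone_iff_continuous]
    exact H.continuous.comp (continuous_const.prodMk continuous_id)
  set T : Set I := {t | Relation.ReflTransGen MComp id (slice t)} with hT
  set N : I → Set I := fun t₀ => ⋂ a : ↥U, (fun t => H (t, a)) ⁻¹' {v | v ≤ H (t₀, a)} with hN
  have hNopen : ∀ t₀, IsOpen (N t₀) := by
    intro t₀
    apply isOpen_iInter_of_finite
    intro a
    apply Continuous.isOpen_preimage
    · exact H.continuous.comp (continuous_id.prodMk continuous_const)
    · rw [Topology.IsLowerSet.isOpen_iff_isLowerSet]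
      exact fun v w hvw hv => le_trans hvw hv
  have hNmem : ∀ t₀, t₀ ∈ N t₀ := fun t₀ => Set.mem_iInter.2 fun a => le_rfl
  have hNcomp : ∀ t₀ t, t ∈ N t₀ → MComp (slice t) (slice t₀) := by
    intro t₀ t ht
    exact ⟨hslicemono t, hslicemono t₀, Or.inl fun a => Set.mem_iInter.1 ht a⟩
  have hTopen : IsOpen T := by
    rw [isOpen_iff_forall_mem_open]
    intro t₀ ht₀
    refine ⟨N t₀, ?_, hNopen t₀, hNmem t₀⟩
    intro t ht
    have h1 := hNcomp t₀ t ht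
    exact Relation.ReflTransGen.tail ht₀ ⟨h1.2.1, h1.1, h1.2.2.symm⟩
  have hTcopen : IsOpen Tᶜ := by
    rw [isOpen_iff_forall_mem_open]
    intro t₀ ht₀
    refine ⟨N t₀, ?_, hNopen t₀, hNmem t₀⟩
    intro t ht ht'
    exact ht₀ (Relation.ReflTransGen.tail ht' (hNcomp t₀ t ht))
  have hzero : (0 : I) ∈ T := by
    have : slice 0 = id := funext fun a => H.apply_zero a
    rw [hT, Set.mem_setOf_eq, this]
  have huniv : T = Set.univ :=
    IsClopen.eq_univ ⟨isOpen_compl_iff.1 hTcopen, hTopen⟩ ⟨0, hzero⟩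
  have hone : (1 : I) ∈ T := huniv ▸ Set.mem_univ _
  have : slice 1 = Function.const ↥U y₀ := funext fun a => H.apply_one a
  rwa [hT, Set.mem_setOf_eq, this] at hone

/-- strong beat point data -/
def HasStrongBeat (U : Set X) : Prop :=
  ∃ b ∈ U, (∃ c, IsGreatest {u | u ∈ U ∧ u < b} c) ∨ (∃ c, IsLeast {u | u ∈ U ∧ b < u} c)

lemma core_lemma {U : Set X} (hnb : ¬ HasStrongBeat U) {f : ↥U → ↥U}
    (hf : Monotone f) (hcomp : f ≤ id ∨ id ≤ f) : f = id := by
  by_contra hne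
  have hs : {a : ↥U | f a ≠ a}.Nonempty := by
    by_contra hempty
    rw [Set.not_nonempty_iff_eq_empty] at hempty
    exact hne (funext fun a => by_contra fun h => by
      have : a ∈ {a : ↥U | f a ≠ a} := h
      simp [hempty] at this)
  rcases hcomp with hle | hge
  · obtain ⟨m, hm, hmin⟩ := (Finite.to_wellFoundedLT (α := ↥U)).wf.has_min _ hs
    apply hnb
    refine ⟨↑m, m.2, Or.inl ⟨↑(f m), ⟨(f m).2, Subtype.coe_lt_coe.2 (lt_of_le_of_ne (hle m) hm)⟩, ?_⟩⟩
    rintro u ⟨huU, hub⟩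
    have : f ⟨u, huU⟩ = ⟨u, huU⟩ := by_contra fun h => hmin _ h (Subtype.mk_lt_mk.2 hub)
    calc (u : X) = ↑(f ⟨u, huU⟩) := by rw [this]
      _ ≤ ↑(f m) := Subtype.coe_le_coe.2 (hf (Subtype.mk_le_mk.2 hub.le))
  · obtain ⟨m, hm, hmin⟩ := (Finite.to_wellFoundedGT (α := ↥U)).wf.has_min _ hs
    apply hnb
    refine ⟨↑m, m.2, Or.inr ⟨↑(f m), ⟨(f m).2, Subtype.coe_lt_coe.2 (lt_of_le_of_ne (hge m) (Ne.symm hm))⟩, ?_⟩⟩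
    rintro u ⟨huU, hub⟩
    have : f ⟨u, huU⟩ = ⟨u, huU⟩ := by_contra fun h => hmin _ h (Subtype.mk_lt_mk.2 hub)
    calc ↑(f m) ≤ ↑(f ⟨u, huU⟩) := Subtype.coe_le_coe.2 (hf (Subtype.mk_le_mk.2 hub.le))
      _ = u := by rw [this]

def GoodBeat (U : Set X) (b c : X) : Prop :=
  b ∈ U ∧ c ∈ U ∧ c ≠ b ∧ (b < c ∨ c < b) ∧
    ∀ u ∈ U, u ≠ c → (u < b ∨ b < u) → (u < c ∨ c < u)

def Dismantle (U V : Set X) : Prop := ∃ b c, GoodBeat U b c ∧ V = U \ {b}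

lemma subContractible_diff {U : Set X} {b c : X} (hb : b ∈ U)
    (hbeat : IsGreatest {u | u ∈ U ∧ u < b} c ∨ IsLeast {u | u ∈ U ∧ b < u} c)
    (h : SubContractible U) : SubContractible (U \ {b}) := by
  have hcU : c ∈ U := by rcases hbeat with h' | h' <;> exact h'.1.1
  have hcb : c ≠ b := by
    rcases hbeat with h' | h'
    · exact ne_of_lt h'.1.2
    · exact ne_of_gt h'.1.2
  rw [subContractible_iff] at h ⊢
  letI : TopologicalSpace ↥U := Topology.lowerSet ↥U
  haveI : Topology.IsLowerSet ↥U := ⟨rfl⟩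
  letI : TopologicalSpace ↥(U \ {b}) := Topology.lowerSet ↥(U \ {b})
  haveI : Topology.IsLowerSet ↥(U \ {b}) := ⟨rfl⟩
  classical
  set r : ↥U → ↥(U \ {b}) := fun u =>
    if h' : (u : X) = b then ⟨c, hcU, hcb⟩ else ⟨u, u.2, h'⟩ with hr
  have hrval : ∀ u : ↥U, (u : X) ≠ b → ((r u : X) = u) := by
    intro u hu; rw [hr]; simp [hu]
  have hrc : ∀ u : ↥U, (u : X) = b → ((r u : X) = c) := by
    intro u hu; rw [hr]; simp [hu]
  have hrmono : Monotone r := by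
    intro u v huv
    rw [← Subtype.coe_le_coe]
    have huv' : (u : X) ≤ v := Subtype.coe_le_coe.2 huv
    by_cases hu : (u : X) = b <;> by_cases hv : (v : X) = b
    · rw [hrc u hu, hrc v hv]
    · rw [hrc u hu, hrval v hv]
      have hbv : b < (v : X) := lt_of_le_of_ne (hu ▸ huv') (Ne.symm hv)
      rcases hbeat with h' | h'
      · exact le_of_lt (lt_trans h'.1.2 hbv)
      · exact h'.2 ⟨v.2, hbv⟩
    · rw [hrval u hu, hrc v hv]
      have hub : (u : X) < b := lt_of_le_of_ne (hv ▸ huv') hu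
      rcases hbeat with h' | h'
      · exact h'.2 ⟨u.2, hub⟩
      · exact le_of_lt (lt_trans hub h'.1.2)
    · rw [hrval u hu, hrval v hv]; exact huv'
  have hrcont : Continuous r := (Topology.IsLowerSet.monotone_iff_continuous).1 hrmono
  have himono : Monotone (Set.inclusion (Set.diff_subset) : ↥(U \ {b}) → ↥U) :=
    fun _ _ h => h
  have hicont : Continuous (Set.inclusion (Set.diff_subset) : ↥(U \ {b}) → ↥U) :=
    (Topology.IsLowerSet.monotone_iff_continuous).1 himono
  obtain ⟨y₀, ⟨H⟩⟩ := (contractible_iff_id_nullhomotopic ↥U).1 h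
  apply (contractible_iff_id_nullhomotopic ↥(U \ {b})).2
  refine ⟨r y₀, ⟨?_⟩⟩
  refine ⟨⟨fun p => r (H (p.1, Set.inclusion Set.diff_subset p.2)), ?_⟩, ?_, ?_⟩
  · exact hrcont.comp (H.continuous.comp (continuous_fst.prodMk
      (hicont.comp continuous_snd)))
  · intro a
    simp only [H.apply_zero]
    exact Subtype.ext (hrval _ a.2.2)
  · intro a
    simp only [H.apply_one]
    rfl

lemma goodBeat_of_strong {U : Set X} {b c : X} (hb : b ∈ U)
    (hbeat : IsGreatest {u | u ∈ U ∧ u < b} c ∨ IsLeast {u | u ∈ U ∧ b < u} c) :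
    GoodBeat U b c := by
  rcases hbeat with h' | h'
  · refine ⟨hb, h'.1.1, ne_of_lt h'.1.2, Or.inr h'.1.2, ?_⟩
    rintro u huU huc (hub | hbu)
    · exact Or.inl (lt_of_le_of_ne (h'.2 ⟨huU, hub⟩) huc)
    · exact Or.inr (lt_trans h'.1.2 hbu)
  · refine ⟨hb, h'.1.1, ne_of_gt h'.1.2, Or.inl h'.1.2, ?_⟩
    rintro u huU huc (hub | hbu)
    · exact Or.inl (lt_trans hub h'.1.2)
    · exact Or.inr (lt_of_le_of_ne (h'.2 ⟨huU, hbu⟩) (Ne.symm huc))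

lemma dismantlable_aux :
    ∀ (n : ℕ) (U : Set X), U.ncard ≤ n → SubContractible U →
      ∃ w ∈ U, Relation.ReflTransGen Dismantle U {w} := by
  intro n
  induction n with
  | zero =>
    intro U hcard h
    obtain ⟨y₀, _⟩ := fence_of_contractible U h
    exact absurd (Set.ncard_eq_zero (Set.toFinite U) |>.1 (Nat.le_zero.1 hcard))
      (Set.nonempty_iff_ne_empty.1 ⟨↑y₀, y₀.2⟩)
  | succ n ih =>
    intro U hcard h
    by_cases hbeat : HasStrongBeat U
    · obtain ⟨b, hb, hbc⟩ := hbeat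
      obtain ⟨c, hc⟩ : ∃ c, IsGreatest {u | u ∈ U ∧ u < b} c ∨ IsLeast {u | u ∈ U ∧ b < u} c := by
        rcases hbc with ⟨c, hc⟩ | ⟨c, hc⟩
        exacts [⟨c, Or.inl hc⟩, ⟨c, Or.inr hc⟩]
      have h2 : SubContractible (U \ {b}) := subContractible_diff hb hc h
      have hlt : (U \ {b}).ncard < U.ncard :=
        Set.ncard_diff_singleton_lt_of_mem hb (Set.toFinite U)
      obtain ⟨w, hw, hrtg⟩ := ih (U \ {b}) (by omega) h2
      refine ⟨w, hw.1, Relation.ReflTransGen.head ⟨b, c, goodBeat_of_strong hb hc, rfl⟩ hrtg⟩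
    · obtain ⟨y₀, hfence⟩ := fence_of_contractible U h
      have hid : ∀ g : ↥U → ↥U, Relation.ReflTransGen MComp id g → g = id := by
        intro g hg
        induction hg with
        | refl => rfl
        | tail _ step ihg =>
          rw [ihg] at step
          exact core_lemma hbeat step.2.1 (step.2.2.symm.imp (fun h' => h') (fun h' => h'))
      have hconst := hid _ hfence
      have hsub : U = {↑y₀} := by
        ext u
        constructor
        · intro hu
          have := congrFun hconst ⟨u, hu⟩
          simp only [Function.const_apply, id_eq] at this
          exact (congrArg Subtype.val this).symm
        · rintro rfl
          exact y₀.2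
      obtain ⟨w, hw⟩ : ∃ w, U = {w} := ⟨↑y₀, hsub⟩
      refine ⟨w, by rw [hw]; rfl, ?_⟩
      rw [hw]

theorem dismantlable_of_subContractible (U : Set X) (h : SubContractible U) :
    ∃ w ∈ U, Relation.ReflTransGen Dismantle U {w} :=
  dismantlable_aux U.ncard U le_rfl h

/-! ### Part 2: simplicial step lemmas -/

section Part2

variable [DecidableEq X]

open scoped Classical in
/-- Intermediate complex: simplices avoiding `x`, together with cone simplices over `B`. -/
def bigC (x : X) (B : Set X) : Finset (Finset X) :=
  Finset.univ.filter fun σ => σ.Nonempty ∧ IsChain (· ≤ ·) (σ : Set X) ∧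
    (x ∉ σ ∨ ↑σ ⊆ insert x B)

open scoped Classical in
/-- Intermediate complex during the collapse of the star of the weak point `z`. -/
def stepK (x z : X) (B W : Set X) : Finset (Finset X) :=
  Finset.univ.filter fun σ => σ.Nonempty ∧ IsChain (· ≤ ·) (σ : Set X) ∧
    (x ∉ σ ∨ (z ∉ σ ∧ ↑σ ⊆ insert x B) ∨ (z ∈ σ ∧ ↑σ ⊆ insert x (insert z W)))

lemma mem_bigC {x : X} {B : Set X} {σ : Finset X} :
    σ ∈ bigC x B ↔ σ.Nonempty ∧ IsChain (· ≤ ·) (σ : Set X) ∧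
      (x ∉ σ ∨ ↑σ ⊆ insert x B) := by
  unfold bigC
  simp [Finset.mem_filter]

lemma mem_stepK {x z : X} {B W : Set X} {σ : Finset X} :
    σ ∈ stepK x z B W ↔ σ.Nonempty ∧ IsChain (· ≤ ·) (σ : Set X) ∧
      (x ∉ σ ∨ (z ∉ σ ∧ ↑σ ⊆ insert x B) ∨ (z ∈ σ ∧ ↑σ ⊆ insert x (insert z W))) := by
  unfold stepK
  simp [Finset.mem_filter]

lemma chain_comp {σ : Finset X} (hc : IsChain (· ≤ ·) (σ : Set X)) {a b : X}
    (ha : a ∈ σ) (hb : b ∈ σ) (hab : a ≠ b) : a < b ∨ b < a :=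
  (hc ha hb hab).imp (fun h => lt_of_le_of_ne h hab) (fun h => lt_of_le_of_ne h hab.symm)

/-- Collapsing the simplices through `x, z` and a (generalized) beat point `b` of `W`. -/
lemma beat_step_collapse {x z b c : X} {B W : Set X}
    (hWz : ∀ u ∈ W, u < z ∨ z < u) (hWx : ∀ u ∈ W, u < x ∨ x < u)
    (hzx : z < x ∨ x < z)
    (hbW : b ∈ W) (hcW : c ∈ W) (hcb : c ≠ b) (hbc : b < c ∨ c < b)
    (hbeat : ∀ u, (u = z ∨ u ∈ W) → u ≠ c → (u < b ∨ b < u) → (u < c ∨ c < u)) :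
    SCollapses (stepK x z B W) (stepK x z B (W \ {b})) := by
  have hcx : c ≠ x := fun h => by rcases hWx c hcW with h' | h' <;> simp [h] at h' <;> exact lt_irrefl x h'
  have hcz : c ≠ z := fun h => by rcases hWz c hcW with h' | h' <;> simp [h] at h' <;> exact lt_irrefl z h'
  have hbx : b ≠ x := fun h => by rcases hWx b hbW with h' | h' <;> simp [h] at h' <;> exact lt_irrefl x h'
  have hbz : b ≠ z := fun h => by rcases hWz b hbW with h' | h' <;> simp [h] at h' <;> exact lt_irrefl z h'
  have key := masterCollapse (stepK x z B W)
      (fun σ => x ∈ σ ∧ z ∈ σ ∧ b ∈ σ) c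
      (fun σ τ hst h => ⟨hst h.1, hst h.2.1, hst h.2.2⟩)
      (fun σ h => ⟨Finset.mem_erase.2 ⟨(Ne.symm hcx), h.1⟩,
        Finset.mem_erase.2 ⟨(Ne.symm hcz), h.2.1⟩,
        Finset.mem_erase.2 ⟨(Ne.symm hcb), h.2.2⟩⟩) ?_
  · convert key using 1
    ext σ
    rw [Iff.comm]
    simp only [Finset.mem_filter, mem_stepK]
    constructor
    · rintro ⟨⟨hne, hch, hdis⟩, hnP⟩
      refine ⟨hne, hch, ?_⟩
      by_cases hx : x ∈ σ
      · rcases hdis with hx' | hd2 | ⟨hz3, hsub3⟩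
        · exact absurd hx hx'
        · exact Or.inr (Or.inl hd2)
        · have hbσ : b ∉ σ := fun hbσ => hnP ⟨hx, hz3, hbσ⟩
          refine Or.inr (Or.inr ⟨hz3, ?_⟩)
          intro a ha
          rcases hsub3 ha with h1 | h1
          · simp [h1]
          · rcases h1 with h1 | h1
            · simp [h1]
            · have hab : a ≠ b := fun h => hbσ (h ▸ ha)
              simp only [Set.mem_insert_iff]
              exact Or.inr (Or.inr ⟨h1, hab⟩)
      · exact Or.inl hx
    · rintro ⟨hne, hch, hdis⟩
      have hsub : σ ∈ stepK x z B (W \ {b}) → True := fun _ => trivial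
      constructor
      · refine ⟨hne, hch, ?_⟩
        rcases hdis with h1 | h1 | ⟨h1, h2⟩
        · exact Or.inl h1
        · exact Or.inr (Or.inl h1)
        · refine Or.inr (Or.inr ⟨h1, ?_⟩)
          intro a ha
          rcases h2 ha with h3 | h3
          · simp [h3]
          · rcases h3 with h3 | h3
            · simp [h3]
            · exact Set.mem_insert_of_mem _ (Set.mem_insert_of_mem _ h3.1)
      · rintro ⟨hx, hz, hb⟩
        rcases hdis with h1 | h1 | ⟨h1, h2⟩
        · exact h1 hx
        · exact h1.1 hz
        · rcases h2 hb with h3 | h3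
          · exact hbx h3
          · rcases h3 with h3 | h3
            · exact hbz h3
            · exact h3.2 rfl
  · -- closure condition
    rintro σ hσ ⟨hx, hz, hb⟩
    obtain ⟨hne, hch, hdis⟩ := mem_stepK.1 hσ
    have hsub3 : ↑σ ⊆ insert x (insert z W) := by
      rcases hdis with h1 | h1 | h1
      · exact absurd hx h1
      · exact absurd hz h1.1
      · exact h1.2
    have hchins : IsChain (· ≤ ·) ((insert c σ : Finset X) : Set X) := by
      rw [Finset.coe_insert]
      refine hch.insert ?_
      intro a ha hac
      have hamem : a = x ∨ (a = z ∨ a ∈ W) := by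
        rcases hsub3 ha with h1 | h1
        · exact Or.inl h1
        · exact Or.inr (by rcases h1 with h1 | h1; exacts [Or.inl h1, Or.inr h1])
      rcases hamem with rfl | hzw
      · rcases hWx c hcW with h' | h'
        · exact Or.inl h'.le
        · exact Or.inr h'.le
      · by_cases hab : a = b
        · subst hab
          exact hbc.elim (fun h => Or.inr h.le) (fun h => Or.inl h.le)
        · have hcompb : a < b ∨ b < a := by
            rcases hzw with rfl | haW
            · rcases hWz b hbW with h' | h'
              · exact Or.inr h'
              · exact Or.inl h'
            · exact chain_comp hch ha hb hab
          exact (hbeat a hzw (Ne.symm hac) hcompb).elim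
            (fun h => Or.inr h.le) (fun h => Or.inl h.le)
    constructor
    · rw [mem_stepK]
      refine ⟨Finset.insert_nonempty _ _, hchins, Or.inr (Or.inr ⟨Finset.mem_insert_of_mem hz, ?_⟩)⟩
      rw [Finset.coe_insert]
      intro a ha
      rcases ha with rfl | ha
      · exact Set.mem_insert_of_mem _ (Set.mem_insert_of_mem _ hcW)
      · exact hsub3 ha
    · rw [mem_stepK]
      refine ⟨⟨x, Finset.mem_erase.2 ⟨Ne.symm hcx, hx⟩⟩, ?_, ?_⟩
      · exact hch.mono (by intro a ha; exact Finset.mem_of_mem_erase ha)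
      · refine Or.inr (Or.inr ⟨Finset.mem_erase.2 ⟨Ne.symm hcz, hz⟩, ?_⟩)
        intro a ha
        exact hsub3 (Finset.mem_of_mem_erase ha)

/-- Final collapse: once one side of the link of `z` has been dismantled to a point `w`,
all simplices through `x` and `z` can be removed. -/
lemma final_step_collapse {x z w : X} {B W : Set X}
    (hWz : ∀ u ∈ W, u < z ∨ z < u) (hWx : ∀ u ∈ W, u < x ∨ x < u)
    (hzx : z < x ∨ x < z) (hzB : z ∉ B) (hWB : W ⊆ B)
    (hwW : w ∈ W) (hw : ∀ u, (u = z ∨ u ∈ W) → u ≠ w → (u < w ∨ w < u)) :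
    SCollapses (stepK x z B W) (bigC x B) := by
  have hwx : w ≠ x := fun h => by rcases hWx w hwW with h' | h' <;> simp [h] at h' <;> exact lt_irrefl x h'
  have hwz : w ≠ z := fun h => by rcases hWz w hwW with h' | h' <;> simp [h] at h' <;> exact lt_irrefl z h'
  have hzxne : z ≠ x := fun h => by rcases hzx with h' | h' <;> simp [h] at h' <;> exact lt_irrefl x h'
  have key := masterCollapse (stepK x z B W)
      (fun σ => x ∈ σ ∧ z ∈ σ) w
      (fun σ τ hst h => ⟨hst h.1, hst h.2⟩)
      (fun σ h => ⟨Finset.mem_erase.2 ⟨(Ne.symm hwx), h.1⟩,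
        Finset.mem_erase.2 ⟨(Ne.symm hwz), h.2⟩⟩) ?_
  · convert key using 1
    ext σ
    rw [Iff.comm]
    simp only [Finset.mem_filter, mem_stepK, mem_bigC]
    constructor
    · rintro ⟨⟨hne, hch, hdis⟩, hnP⟩
      refine ⟨hne, hch, ?_⟩
      by_cases hx : x ∈ σ
      · rcases hdis with hx' | ⟨_, hd2⟩ | ⟨hz3, _⟩
        · exact absurd hx hx'
        · exact Or.inr hd2
        · exact absurd ⟨hx, hz3⟩ hnP
      · exact Or.inl hx
    · rintro ⟨hne, hch, hdis⟩
      by_cases hx : x ∈ σ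
      · rcases hdis with hx' | hsub
        · exact absurd hx hx'
        · have hzσ : z ∉ σ := by
            intro hzσ
            rcases hsub hzσ with h1 | h1
            · exact hzxne h1
            · exact hzB h1
          exact ⟨⟨hne, hch, Or.inr (Or.inl ⟨hzσ, hsub⟩)⟩, fun hP => hzσ hP.2⟩
      · exact ⟨⟨hne, hch, Or.inl hx⟩, fun hP => hx hP.1⟩
  · rintro σ hσ ⟨hx, hz⟩
    obtain ⟨hne, hch, hdis⟩ := mem_stepK.1 hσ
    have hsub3 : ↑σ ⊆ insert x (insert z W) := by
      rcases hdis with h1 | h1 | h1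
      · exact absurd hx h1
      · exact absurd hz h1.1
      · exact h1.2
    have hchins : IsChain (· ≤ ·) ((insert w σ : Finset X) : Set X) := by
      rw [Finset.coe_insert]
      refine hch.insert ?_
      intro a ha hac
      have hamem : a = x ∨ (a = z ∨ a ∈ W) := by
        rcases hsub3 ha with h1 | h1
        · exact Or.inl h1
        · exact Or.inr (by rcases h1 with h1 | h1; exacts [Or.inl h1, Or.inr h1])
      rcases hamem with rfl | hzw
      · rcases hWx w hwW with h' | h'
        · exact Or.inl h'.le
        · exact Or.inr h'.le
      · exact (hw a hzw (Ne.symm hac)).elim (fun h => Or.inr h.le) (fun h => Or.inl h.le)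
    constructor
    · rw [mem_stepK]
      refine ⟨Finset.insert_nonempty _ _, hchins,
        Or.inr (Or.inr ⟨Finset.mem_insert_of_mem hz, ?_⟩)⟩
      rw [Finset.coe_insert]
      intro a ha
      rcases ha with rfl | ha
      · exact Set.mem_insert_of_mem _ (Set.mem_insert_of_mem _ hwW)
      · exact hsub3 ha
    · rw [mem_stepK]
      refine ⟨⟨x, Finset.mem_erase.2 ⟨Ne.symm hwx, hx⟩⟩, ?_, ?_⟩
      · exact hch.mono (by intro a ha; exact Finset.mem_of_mem_erase ha)
      · refine Or.inr (Or.inr ⟨Finset.mem_erase.2 ⟨Ne.symm hwz, hz⟩, ?_⟩)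
        intro a ha
        exact hsub3 (Finset.mem_of_mem_erase ha)

lemma mem_orderComplexIn {A : Set X} {σ : Finset X} :
    σ ∈ orderComplexIn X A ↔ σ.Nonempty ∧ IsChain (· ≤ ·) (σ : Set X) ∧ ↑σ ⊆ A := by
  unfold orderComplexIn
  simp [Finset.mem_filter]

/-- Lifting a dismantling of one half of the link of `z` to collapses of the
intermediate complexes. -/
lemma dismantle_lift (x z : X) (B : Set X) (S Fix : Set X)
    (hSz : ∀ u ∈ S, u < z ∨ z < u) (hFz : ∀ u ∈ Fix, u < z ∨ z < u)
    (hSx : ∀ u ∈ S, u < x ∨ x < u) (hFx : ∀ u ∈ Fix, u < x ∨ x < u)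
    (hzx : z < x ∨ x < z)
    (hcross : ∀ u ∈ S, ∀ v ∈ Fix, u < v ∨ v < u) :
    ∀ U V : Set X, Relation.ReflTransGen Dismantle U V → U ⊆ S →
      SCollapses (stepK x z B (U ∪ Fix)) (stepK x z B (V ∪ Fix)) := by
  intro U V hrtg
  induction hrtg using Relation.ReflTransGen.head_induction_on with
  | refl => intro _; exact Relation.ReflTransGen.refl
  | @head U' M hstep hrtg ih =>
    intro hUS
    obtain ⟨b, c, ⟨hbU, hcU, hcb, hbc, hgood⟩, rfl⟩ := hstep
    have hMS : U' \ {b} ⊆ S := fun u hu => hUS hu.1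
    have hdisj : ∀ u, u ∈ S → u ∈ Fix → False := by
      intro u hu1 hu2
      rcases hcross u hu1 u hu2 with h' | h' <;> exact lt_irrefl u h'
    have hWeq : (U' \ {b}) ∪ Fix = (U' ∪ Fix) \ {b} := by
      ext u
      simp only [Set.mem_union, Set.mem_diff, Set.mem_singleton_iff]
      constructor
      · rintro (⟨hu, hub⟩ | hu)
        · exact ⟨Or.inl hu, hub⟩
        · exact ⟨Or.inr hu, fun h => hdisj b (hUS hbU) (h ▸ hu)⟩
      · rintro ⟨hu | hu, hub⟩
        · exact Or.inl ⟨hu, hub⟩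
        · exact Or.inr hu
    have hstep' : SCollapses (stepK x z B (U' ∪ Fix)) (stepK x z B ((U' \ {b}) ∪ Fix)) := by
      rw [hWeq]
      apply beat_step_collapse (b := b) (c := c)
      · rintro u (hu | hu)
        exacts [hSz u (hUS hu), hFz u hu]
      · rintro u (hu | hu)
        exacts [hSx u (hUS hu), hFx u hu]
      · exact hzx
      · exact Or.inl hbU
      · exact Or.inl hcU
      · exact hcb
      · exact hbc
      · rintro u (rfl | hu | hu) huc hcompb
        · rcases hSz c (hUS hcU) with h' | h'
          exacts [Or.inr h', Or.inl h']
        · exact hgood u hu huc hcompb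
        · rcases hcross c (hUS hcU) u hu with h' | h'
          exacts [Or.inr h', Or.inl h']
    exact Relation.ReflTransGen.trans hstep' (ih hMS)

/-- Removal of a weak point `z` of `A` induces a collapse of the intermediate complexes. -/
lemma weak_step (x : X) (A : Set X) (hA : ∀ u ∈ A, u < x ∨ x < u) {z : X}
    (hz : IsWeakPointIn A z) :
    SCollapses (bigC x A) (bigC x (A \ {z})) := by
  obtain ⟨hzA, hcontr⟩ := hz
  set B : Set X := A \ {z} with hB
  set D : Set X := {y | y ∈ A ∧ y < z} with hD
  set F : Set X := {y | y ∈ A ∧ z < y} with hF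
  have hzx : z < x ∨ x < z := hA z hzA
  have hDz : ∀ u ∈ D, u < z ∨ z < u := fun u hu => Or.inl hu.2
  have hFz : ∀ u ∈ F, u < z ∨ z < u := fun u hu => Or.inr hu.2
  have hDx : ∀ u ∈ D, u < x ∨ x < u := fun u hu => hA u hu.1
  have hFx : ∀ u ∈ F, u < x ∨ x < u := fun u hu => hA u hu.1
  have hDB : D ⊆ B := by
    rintro u ⟨hu1, hu2⟩
    refine ⟨hu1, fun h => ?_⟩
    rw [Set.mem_singleton_iff] at h
    subst h
    exact lt_irrefl _ hu2
  have hFB : F ⊆ B := by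
    rintro u ⟨hu1, hu2⟩
    refine ⟨hu1, fun h => ?_⟩
    rw [Set.mem_singleton_iff] at h
    subst h
    exact lt_irrefl _ hu2
  have hzB : z ∉ B := fun h => h.2 rfl
  have hbigC_eq : bigC x A = stepK x z B (D ∪ F) := by
    ext σ
    simp only [mem_bigC, mem_stepK]
    refine and_congr_right fun hne => and_congr_right fun hch => ?_
    constructor
    · intro hdis
      rcases hdis with hx | hsub
      · exact Or.inl hx
      · by_cases hzσ : z ∈ σ
        · refine Or.inr (Or.inr ⟨hzσ, ?_⟩)
          intro a ha
          rcases hsub ha with h1 | h1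
          · simp [h1]
          · by_cases haz : a = z
            · simp [haz]
            · rcases chain_comp hch ha hzσ haz with h2 | h2
              · exact Set.mem_insert_of_mem _ (Set.mem_insert_of_mem _ (Or.inl ⟨h1, h2⟩))
              · exact Set.mem_insert_of_mem _ (Set.mem_insert_of_mem _ (Or.inr ⟨h1, h2⟩))
        · refine Or.inr (Or.inl ⟨hzσ, ?_⟩)
          intro a ha
          rcases hsub ha with h1 | h1
          · simp [h1]
          · exact Set.mem_insert_of_mem _ ⟨h1, fun h => hzσ (h ▸ ha)⟩
    · intro hdis
      rcases hdis with hx | ⟨_, hsub⟩ | ⟨_, hsub⟩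
      · exact Or.inl hx
      · refine Or.inr fun a ha => ?_
        rcases hsub ha with h1 | h1
        · simp [h1]
        · exact Set.mem_insert_of_mem _ h1.1
      · refine Or.inr fun a ha => ?_
        rcases hsub ha with h1 | h1
        · simp [h1]
        · rcases h1 with rfl | h1
          · exact Set.mem_insert_of_mem _ hzA
          · rcases h1 with h1 | h1
            exacts [Set.mem_insert_of_mem _ h1.1, Set.mem_insert_of_mem _ h1.1]
  rcases hcontr with hc | hc
  · -- lower part of the link contractible
    obtain ⟨w, hwD, hrtg⟩ := dismantlable_of_subContractible D hc
    have hlift := dismantle_lift x z B D F hDz hFz hDx hFx hzx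
      (fun u hu v hv => Or.inl (lt_trans hu.2 hv.2)) D {w} hrtg (subset_refl D)
    rw [← hbigC_eq] at hlift
    refine Relation.ReflTransGen.trans hlift ?_
    apply final_step_collapse (w := w)
    · rintro u (hu | hu)
      · rw [Set.mem_singleton_iff] at hu; subst hu; exact hDz _ hwD
      · exact hFz u hu
    · rintro u (hu | hu)
      · rw [Set.mem_singleton_iff] at hu; subst hu; exact hDx _ hwD
      · exact hFx u hu
    · exact hzx
    · exact hzB
    · rintro u (hu | hu)
      · rw [Set.mem_singleton_iff] at hu; subst hu; exact hDB hwD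
      · exact hFB hu
    · exact Or.inl rfl
    · rintro u (rfl | hu | hu) huw
      · exact Or.inr hwD.2
      · rw [Set.mem_singleton_iff] at hu; exact absurd hu huw
      · exact Or.inr (lt_trans hwD.2 hu.2)
  · -- upper part of the link contractible
    obtain ⟨w, hwF, hrtg⟩ := dismantlable_of_subContractible F hc
    have hlift := dismantle_lift x z B F D hFz hDz hFx hDx hzx
      (fun u hu v hv => Or.inr (lt_trans hv.2 hu.2)) F {w} hrtg (subset_refl F)
    have hcomm1 : stepK x z B (F ∪ D) = stepK x z B (D ∪ F) := by rw [Set.union_comm]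
    have hcomm2 : stepK x z B ({w} ∪ D) = stepK x z B (D ∪ {w}) := by rw [Set.union_comm]
    rw [hcomm1, ← hbigC_eq, hcomm2] at hlift
    refine Relation.ReflTransGen.trans hlift ?_
    apply final_step_collapse (w := w)
    · rintro u (hu | hu)
      · exact hDz u hu
      · rw [Set.mem_singleton_iff] at hu; subst hu; exact hFz _ hwF
    · rintro u (hu | hu)
      · exact hDx u hu
      · rw [Set.mem_singleton_iff] at hu; subst hu; exact hFx _ hwF
    · exact hzx
    · exact hzB
    · rintro u (hu | hu)
      · exact hDB hu
      · rw [Set.mem_singleton_iff] at hu; subst hu; exact hFB hwF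
    · exact Or.inr rfl
    · rintro u (rfl | hu | hu) huw
      · exact Or.inl hwF.2
      · exact Or.inl (lt_trans hu.2 hwF.2)
      · rw [Set.mem_singleton_iff] at hu; exact absurd hu huw

end Part2

theorem orderComplex_collapses_of_link_collapsible (X : Type) [PartialOrder X] [Fintype X]
    [DecidableEq X] (x : X) (h : SpaceCollapsible {y : X | y < x ∨ x < y}) :
    SCollapses (orderComplexIn X Set.univ) (orderComplexIn X {x}ᶜ) := by
  obtain ⟨y, hy, hrtg⟩ := h
  set L : Set X := {y' : X | y' < x ∨ x < y'} with hL
  -- sets only shrink along space collapses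
  have hshrink : ∀ A A' : Set X, Relation.ReflTransGen ElemSpaceCollapse A A' → A' ⊆ A := by
    intro A A' hr
    induction hr with
    | refl => exact subset_refl _
    | tail _ hstep ih =>
      obtain ⟨z, _, rfl⟩ := hstep
      exact fun u hu => ih hu.1
  have hyL : y ∈ L := hshrink L {y} hrtg rfl
  -- the collapses along the space collapse of the link
  have main : ∀ A A' : Set X, Relation.ReflTransGen ElemSpaceCollapse A A' →
      A ⊆ L → SCollapses (bigC x A) (bigC x A') := by
    intro A A' hr
    induction hr using Relation.ReflTransGen.head_induction_on with
    | refl => intro _; exact Relation.ReflTransGen.refl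
    | @head A M hstep hrtg' ih =>
      intro hAL
      obtain ⟨z, hweak, rfl⟩ := hstep
      have hA : ∀ u ∈ A, u < x ∨ x < u := fun u hu => hAL hu
      have hstep' := weak_step x A hA hweak
      exact Relation.ReflTransGen.trans hstep' (ih fun u hu => hAL hu.1)
  -- identification of the two ends
  have h1 : orderComplexIn X Set.univ = bigC x L := by
    ext σ
    simp only [mem_orderComplexIn, mem_bigC]
    refine and_congr_right fun hne => and_congr_right fun hch => ?_
    constructor
    · intro _
      by_cases hx : x ∈ σ
      · refine Or.inr fun a ha => ?_
        by_cases hax : a = x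
        · simp [hax]
        · rcases chain_comp hch ha hx hax with h' | h'
          · exact Set.mem_insert_of_mem _ (Or.inl h')
          · exact Set.mem_insert_of_mem _ (Or.inr h')
      · exact Or.inl hx
    · intro _
      exact Set.subset_univ _
  have h2 := main L {y} hrtg (subset_refl L)
  -- the very last collapse : remove {x} and {x, y}
  have h3 : SCollapses (bigC x ({y} : Set X)) (orderComplexIn X {x}ᶜ) := by
    have hyx : y ≠ x := fun h => by
      rcases hyL with h' | h' <;> rw [h] at h' <;> exact lt_irrefl x h'
    have key := masterCollapse (bigC x ({y} : Set X)) (fun σ => x ∈ σ) y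
      (fun σ τ hst hx => hst hx)
      (fun σ hx => Finset.mem_erase.2 ⟨Ne.symm hyx, hx⟩) ?_
    · convert key using 1
      ext σ
      rw [Iff.comm]
      simp only [Finset.mem_filter, mem_bigC, mem_orderComplexIn]
      constructor
      · rintro ⟨⟨hne, hch, _⟩, hx⟩
        exact ⟨hne, hch, fun a ha => fun h => hx ((Set.mem_singleton_iff.1 h) ▸ ha)⟩
      · rintro ⟨hne, hch, hsub⟩
        have hx : x ∉ σ := fun hx => hsub hx rfl
        exact ⟨⟨hne, hch, Or.inl hx⟩, hx⟩
    · rintro σ hσ hx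
      obtain ⟨hne, hch, hdis⟩ := mem_bigC.1 hσ
      have hsub : ↑σ ⊆ insert x ({y} : Set X) := by
        rcases hdis with h1 | h1
        · exact absurd hx h1
        · exact h1
      have hchins : IsChain (· ≤ ·) ((insert y σ : Finset X) : Set X) := by
        rw [Finset.coe_insert]
        refine hch.insert ?_
        intro a ha hay
        rcases hsub ha with h1 | h1
        · subst h1
          rcases hyL with h' | h'
          · exact Or.inl h'.le
          · exact Or.inr h'.le
        · exact absurd (Set.mem_singleton_iff.1 h1).symm hay
      constructor
      · rw [mem_bigC]
        refine ⟨Finset.insert_nonempty _ _, hchins, Or.inr ?_⟩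
        rw [Finset.coe_insert]
        intro a ha
        rcases ha with rfl | ha
        · exact Set.mem_insert_of_mem _ rfl
        · exact hsub ha
      · rw [mem_bigC]
        refine ⟨⟨x, Finset.mem_erase.2 ⟨Ne.symm hyx, hx⟩⟩, ?_, Or.inr ?_⟩
        · exact hch.mono (by intro a ha; exact Finset.mem_of_mem_erase ha)
        · intro a ha
          exact hsub (Finset.mem_of_mem_erase ha)
  rw [h1]
  exact Relation.ReflTransGen.trans h2 h3
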